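/- Suppose γ = 2 and Σ, β are differentiable with dΣ/ds = −((1 − Σ²)/2)(−η cos β)/(2 + Σ η cos β) and β = φ − α where dα/ds = ((1 − Σ²)/(2Σ)) · η sin β/(2 + Σ η cos β) for some constant φ and constant η. Then the product Σ(s) sin β(s) is constant along solutions. -/

import Mathlib

open Real

/-- Stiff case `γ = 2` of the linear matter model: `Σ sin β` is conserved, where
`β = φ − α`. -/
theorem stiff_case_conserved_quantity (η φ : ℝ) (S α : ℝ → ℝ)
    (hS : ∀ s, S s ∈ Set.Ioo (0 : ℝ) 1)
    (hodeS : ∀ s, HasDerivAt S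
      (-((1 - (S s) ^ 2) / 2) * (-η * Real.cos (φ - α s)) /
        (2 + S s * η * Real.cos (φ - α s))) s)
    (hodeα : ∀ s, HasDerivAt α
      (((1 - (S s) ^ 2) / (2 * S s)) * (η * Real.sin (φ - α s)) /
        (2 + S s * η * Real.cos (φ - α s))) s) :
    ∀ s s' : ℝ, S s * Real.sin (φ - α s) = S s' * Real.sin (φ - α s') := by
  have key : ∀ s, HasDerivAt (fun s => S s * Real.sin (φ - α s)) 0 s := by
    intro s
    have hS0 : S s ≠ 0 := ne_of_gt (hS s).1
    set c := Real.cos (φ - α s) with hc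
    set n := Real.sin (φ - α s) with hn
    have hβ : HasDerivAt (fun s => φ - α s)
        (-(((1 - (S s) ^ 2) / (2 * S s)) * (η * n) / (2 + S s * η * c))) s :=
      (hodeα s).const_sub φ
    have hsin : HasDerivAt (fun s => Real.sin (φ - α s))
        (c * -(((1 - (S s) ^ 2) / (2 * S s)) * (η * n) / (2 + S s * η * c))) s := by
      simpa [hc, Function.comp_def] using (Real.hasDerivAt_sin (φ - α s)).comp s hβ
    have hmul := (hodeS s).mul hsin
    have hzero : -((1 - (S s) ^ 2) / 2) * (-η * c) / (2 + S s * η * c) * n +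
        S s * (c * -(((1 - (S s) ^ 2) / (2 * S s)) * (η * n) / (2 + S s * η * c))) = 0 := by
      by_cases hD : (2 + S s * η * c) = 0
      · simp [hD]
      · field_simp
        ring
    rw [hzero] at hmul
    exact hmul
  intro s s'
  have hdiff : Differentiable ℝ (fun s => S s * Real.sin (φ - α s)) :=
    fun t => (key t).differentiableAt
  have hderiv : ∀ t, deriv (fun s => S s * Real.sin (φ - α s)) t = 0 :=
    fun t => (key t).deriv
  exact is_const_of_deriv_eq_zero hdiff hderiv s s'
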